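/- Let M, M̂, X, Y, Ȳ, C be random variables taking values in finite sets, and suppose H(M | (C, X)) = 0 (M is a.s. a function of (C, X)) and H(M̂ | (C, Y)) = 0 (M̂ is a.s. a function of (C, Y)). Then H(M) ≤ I(X; Y | (C, Ȳ)) + I(M; (C, Ȳ)) + H(M | M̂). -/

import Mathlib

open scoped BigOperators Classical

noncomputable section

namespace OT

variable {Ω : Type*} [Fintype Ω]

/-- Probability of an event under a pmf on a finite sample space. -/
def pr (μ : Ω → ℝ) (s : Set Ω) : ℝ := ∑ ω, s.indicator μ ω

/-- `q` is a probability mass function on a finite type. -/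
def isDist {α : Type*} [Fintype α] (q : α → ℝ) : Prop := (∀ a, 0 ≤ q a) ∧ ∑ a, q a = 1

/-- Distribution (pmf) of a random variable. -/
def dst {α : Type*} (μ : Ω → ℝ) (X : Ω → α) : α → ℝ := fun a => pr μ {ω | X ω = a}

/-- Joint distribution of two random variables. -/
def jd {α β : Type*} (μ : Ω → ℝ) (X : Ω → α) (Y : Ω → β) : α × β → ℝ :=
  fun q => pr μ {ω | X ω = q.1 ∧ Y ω = q.2}

/-- Conditional pmf given an event. -/
def cnd (μ : Ω → ℝ) (s : Set Ω) : Ω → ℝ := fun ω => s.indicator μ ω / pr μ s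

/-- Shannon entropy (in bits) of a pmf on a finite type. -/
def entD {α : Type*} [Fintype α] (q : α → ℝ) : ℝ := ∑ a, -(q a * Real.logb 2 (q a))

/-- Shannon entropy (in bits) of a random variable. -/
def ent {α : Type*} [Fintype α] (μ : Ω → ℝ) (X : Ω → α) : ℝ := entD (dst μ X)

/-- Conditional Shannon entropy `H(X|Y)` (in bits). -/
def condEnt {α β : Type*} [Fintype α] [Fintype β] (μ : Ω → ℝ) (X : Ω → α) (Y : Ω → β) : ℝ :=
  ent μ (fun ω => (X ω, Y ω)) - ent μ Y

/-- Mutual information `I(X;Y)` (in bits). -/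
def mi {α β : Type*} [Fintype α] [Fintype β] (μ : Ω → ℝ) (X : Ω → α) (Y : Ω → β) : ℝ :=
  ent μ X + ent μ Y - ent μ (fun ω => (X ω, Y ω))

/-- Conditional mutual information `I(X;Y|Z)` (in bits). -/
def cmi {α β γ : Type*} [Fintype α] [Fintype β] [Fintype γ]
    (μ : Ω → ℝ) (X : Ω → α) (Y : Ω → β) (Z : Ω → γ) : ℝ :=
  ent μ (fun ω => (X ω, Z ω)) + ent μ (fun ω => (Y ω, Z ω))
    - ent μ (fun ω => (X ω, Y ω, Z ω)) - ent μ Z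

/-- Rényi entropy of order two (in bits). -/
def ren2 {α : Type*} [Fintype α] (μ : Ω → ℝ) (X : Ω → α) : ℝ :=
  Real.logb 2 (1 / ∑ a, (dst μ X a) ^ 2)

/-- Statistical (total variation) distance between two pmfs. -/
def sd {α : Type*} [Fintype α] (q q' : α → ℝ) : ℝ := (∑ a, |q a - q' a|) / 2

/-- Conditional min-entropy `H∞(X|Y)` of a joint pmf (in bits):
the minimum over `(a,b)` in the support of `log₂ (P(Y=b) / P(X=a, Y=b))`. -/
def minEnt {α β : Type*} [Fintype α] [Fintype β] (q : α × β → ℝ) : ℝ :=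
  sInf {r | ∃ a b, 0 < q (a, b) ∧ r = Real.logb 2 ((∑ a', q (a', b)) / q (a, b))}

/-- `ε`-smooth conditional min-entropy of a joint pmf (in bits). -/
def sminEnt {α β : Type*} [Fintype α] [Fintype β] (q : α × β → ℝ) (ε : ℝ) : ℝ :=
  sSup {r | ∃ q' : α × β → ℝ, isDist q' ∧ sd q q' ≤ ε ∧ r = minEnt q'}

/-- Conditional zero-entropy `H₀(X|Y)` of a joint pmf (in bits). -/
def zeroEnt {α β : Type*} [Fintype α] [Fintype β] (q : α × β → ℝ) : ℝ :=
  sSup {r | ∃ b, 0 < ∑ a, q (a, b) ∧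
    r = Real.logb 2 ((Finset.univ.filter fun a => 0 < q (a, b)).card)}

end OT

open OT

open OT

set_option linter.unusedSectionVars false

section Lemmas
variable {Ω : Type*} [Fintype Ω] {α β γ δ : Type*} [Fintype α] [Fintype β] [Fintype γ] [Fintype δ]

lemma pr_eq (μ : Ω → ℝ) (s : Set Ω) :
    pr μ s = ∑ ω ∈ Finset.univ.filter (· ∈ s), μ ω := by
  rw [pr, Finset.sum_filter]
  simp [Set.indicator_apply]

lemma dst_eq (μ : Ω → ℝ) (X : Ω → α) (a : α) :
    dst μ X a = ∑ ω ∈ Finset.univ.filter (fun ω => X ω = a), μ ω := by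
  rw [dst, pr_eq]; rfl

lemma dst_nonneg {μ : Ω → ℝ} (hμ : ∀ ω, 0 ≤ μ ω) (X : Ω → α) (a : α) :
    0 ≤ dst μ X a := by
  rw [dst_eq]; exact Finset.sum_nonneg fun ω _ => hμ ω

lemma sum_dst (μ : Ω → ℝ) (X : Ω → α) : ∑ a, dst μ X a = ∑ ω, μ ω := by
  simp_rw [dst_eq]
  exact Finset.sum_fiberwise _ _ _

lemma dst_comp (μ : Ω → ℝ) (X : Ω → α) (f : α → γ) (c : γ) :
    dst μ (fun ω => f (X ω)) c = ∑ a ∈ Finset.univ.filter (fun a => f a = c), dst μ X a := by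
  simp_rw [dst_eq]
  rw [← Finset.sum_fiberwise_of_maps_to (g := X)
    (s := Finset.univ.filter (fun ω => f (X ω) = c))
    (t := Finset.univ.filter (fun a => f a = c)) (by intro ω hω; simp_all)]
  refine Finset.sum_congr rfl fun a ha => ?_
  refine Finset.sum_congr ?_ fun _ _ => rfl
  ext ω
  simp only [Finset.mem_filter, Finset.mem_univ, true_and]
  constructor
  · rintro ⟨_, h⟩; exact h
  · rintro h; simp only [Finset.mem_filter, Finset.mem_univ, true_and] at ha
    exact ⟨h ▸ ha, h⟩

lemma dst_le_one {μ : Ω → ℝ} (hμ : isDist μ) (X : Ω → α) (a : α) :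
    dst μ X a ≤ 1 := by
  have h := sum_dst μ X
  rw [hμ.2] at h
  calc dst μ X a ≤ ∑ a', dst μ X a' :=
        Finset.single_le_sum (fun a' _ => dst_nonneg hμ.1 X a') (Finset.mem_univ a)
    _ = 1 := h

lemma ent_nonneg {μ : Ω → ℝ} (hμ : isDist μ) (X : Ω → α) : 0 ≤ ent μ X := by
  refine Finset.sum_nonneg fun a _ => ?_
  rw [neg_nonneg]
  rcases eq_or_lt_of_le (dst_nonneg hμ.1 X a) with h | h
  · simp [← h]
  · exact mul_nonpos_of_nonneg_of_nonpos h.le (Real.logb_nonpos one_lt_two h.le (dst_le_one hμ X a))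

lemma ent_comp_inj (μ : Ω → ℝ) (X : Ω → α) {f : α → γ} (hf : Function.Injective f) :
    ent μ (fun ω => f (X ω)) = ent μ X := by
  unfold ent entD
  rw [← Finset.sum_subset (Finset.subset_univ (Finset.univ.image f))]
  · rw [Finset.sum_image (fun a _ b _ h => hf h)]
    refine Finset.sum_congr rfl fun a _ => ?_
    have : dst μ (fun ω => f (X ω)) (f a) = dst μ X a := by
      rw [dst_comp]
      rw [show Finset.univ.filter (fun a' => f a' = f a) = {a} by
        ext a'; simp [hf.eq_iff]]
      simp
    rw [this]
  · intro c _ hc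
    have : dst μ (fun ω => f (X ω)) c = 0 := by
      rw [dst_comp]
      rw [show Finset.univ.filter (fun a' => f a' = c) = ∅ by
        ext a'; simp only [Finset.mem_filter, Finset.mem_univ, true_and, Finset.notMem_empty,
          iff_false]
        rintro rfl
        exact hc (Finset.mem_image_of_mem f (Finset.mem_univ a'))]
      simp
    simp [this]

end Lemmas
section Lemmas2
variable {Ω : Type*} [Fintype Ω] {α β γ : Type*} [Fintype α] [Fintype β] [Fintype γ]

lemma dst_XZ (μ : Ω → ℝ) (X : Ω → α) (Y : Ω → β) (Z : Ω → γ) (a : α) (c : γ) :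
    dst μ (fun ω => (X ω, Z ω)) (a, c)
      = ∑ b, dst μ (fun ω => (X ω, Y ω, Z ω)) (a, b, c) := by
  have h := dst_comp μ (fun ω => (X ω, Y ω, Z ω)) (fun q => (q.1, q.2.2)) (a, c)
  simp only at h
  rw [h, Finset.sum_filter, Fintype.sum_prod_type]
  simp [Fintype.sum_prod_type, Prod.ext_iff, ite_and, Finset.sum_ite_eq', Finset.sum_ite_eq]

lemma dst_YZ (μ : Ω → ℝ) (X : Ω → α) (Y : Ω → β) (Z : Ω → γ) (b : β) (c : γ) :
    dst μ (fun ω => (Y ω, Z ω)) (b, c)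
      = ∑ a, dst μ (fun ω => (X ω, Y ω, Z ω)) (a, b, c) := by
  have h := dst_comp μ (fun ω => (X ω, Y ω, Z ω)) (fun q => (q.2.1, q.2.2)) (b, c)
  simp only at h
  rw [h, Finset.sum_filter, Fintype.sum_prod_type]
  simp [Fintype.sum_prod_type, Prod.ext_iff, ite_and, Finset.sum_ite_eq', Finset.sum_ite_eq]

lemma dst_Z (μ : Ω → ℝ) (X : Ω → α) (Y : Ω → β) (Z : Ω → γ) (c : γ) :
    dst μ Z c = ∑ a, ∑ b, dst μ (fun ω => (X ω, Y ω, Z ω)) (a, b, c) := by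
  have h := dst_comp μ (fun ω => (X ω, Y ω, Z ω)) (fun q => q.2.2) c
  simp only at h
  rw [h, Finset.sum_filter, Fintype.sum_prod_type]
  simp [Fintype.sum_prod_type, Finset.sum_ite_eq', Finset.sum_ite_eq]

end Lemmas2
section Lemmas3

lemma point_bound {p pxz pyz pz : ℝ} (hp : 0 ≤ p) (h1 : p ≤ pxz) (h2 : p ≤ pyz)
    (h3 : pxz ≤ pz) :
    (p - (if 0 < p then pxz * pyz / pz else 0)) / Real.log 2
      ≤ -(p * Real.logb 2 pxz) + -(p * Real.logb 2 pyz)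
        - -(p * Real.logb 2 p) - -(p * Real.logb 2 pz) := by
  have hlog2 : 0 < Real.log 2 := Real.log_pos one_lt_two
  rcases hp.eq_or_lt with h | hpp
  · simp [← h]
  · rw [if_pos hpp]
    have hxz : 0 < pxz := lt_of_lt_of_le hpp h1
    have hyz : 0 < pyz := lt_of_lt_of_le hpp h2
    have hz : 0 < pz := lt_of_lt_of_le hxz h3
    set u : ℝ := p * pz / (pxz * pyz) with hu
    have hu0 : 0 < u := by positivity
    have hlu : 1 - u⁻¹ ≤ Real.log u := by
      have := Real.log_le_sub_one_of_pos (inv_pos.2 hu0)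
      rw [Real.log_inv] at this
      linarith
    have hpu : p * u⁻¹ = pxz * pyz / pz := by
      rw [hu]
      field_simp
    have hmain : p - pxz * pyz / pz ≤ p * Real.log u := by
      have := mul_le_mul_of_nonneg_left hlu hp
      rw [mul_sub, mul_one, hpu] at this
      linarith
    have hrw : -(p * Real.logb 2 pxz) + -(p * Real.logb 2 pyz)
        - -(p * Real.logb 2 p) - -(p * Real.logb 2 pz)
        = p * Real.log u / Real.log 2 := by
      rw [hu, Real.logb, Real.logb, Real.logb, Real.logb,
        Real.log_div (by positivity) (by positivity),
        Real.log_mul hpp.ne' hz.ne', Real.log_mul hxz.ne' hyz.ne']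
      field_simp
      ring
    rw [hrw, div_le_div_iff_of_pos_right hlog2]
    exact hmain

end Lemmas3
section Lemmas4
variable {Ω : Type*} [Fintype Ω] {α β γ : Type*} [Fintype α] [Fintype β] [Fintype γ]

lemma sum_rot (f : α → β → γ → ℝ) :
    ∑ a, ∑ b, ∑ c, f a b c = ∑ c, ∑ a, ∑ b, f a b c :=
  calc ∑ a, ∑ b, ∑ c, f a b c
      = ∑ a, ∑ c, ∑ b, f a b c := Finset.sum_congr rfl fun a _ => Finset.sum_comm
    _ = ∑ c, ∑ a, ∑ b, f a b c := Finset.sum_comm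

lemma sum_swap12 (f : α → β → γ → ℝ) :
    ∑ a, ∑ b, ∑ c, f a b c = ∑ b, ∑ a, ∑ c, f a b c := Finset.sum_comm

lemma core_nonneg (p : α × β × γ → ℝ) (pxz : α → γ → ℝ) (pyz : β → γ → ℝ) (pz : γ → ℝ)
    (hp0 : ∀ q, 0 ≤ p q) (hsum : ∑ a, ∑ b, ∑ c, p (a, b, c) = 1)
    (hxz : ∀ a c, pxz a c = ∑ b, p (a, b, c))
    (hyz : ∀ b c, pyz b c = ∑ a, p (a, b, c))
    (hz : ∀ c, pz c = ∑ a, ∑ b, p (a, b, c)) :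
    0 ≤ (∑ a, ∑ c, -(pxz a c * Real.logb 2 (pxz a c)))
      + (∑ b, ∑ c, -(pyz b c * Real.logb 2 (pyz b c)))
      - (∑ a, ∑ b, ∑ c, -(p (a, b, c) * Real.logb 2 (p (a, b, c))))
      - (∑ c, -(pz c * Real.logb 2 (pz c))) := by
  classical
  have hpxz0 : ∀ a c, 0 ≤ pxz a c := fun a c => (hxz a c) ▸
    Finset.sum_nonneg fun b _ => hp0 (a, b, c)
  have hpyz0 : ∀ b c, 0 ≤ pyz b c := fun b c => (hyz b c) ▸
    Finset.sum_nonneg fun a _ => hp0 (a, b, c)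
  have hpz0 : ∀ c, 0 ≤ pz c := fun c => (hz c) ▸
    Finset.sum_nonneg fun a _ => Finset.sum_nonneg fun b _ => hp0 (a, b, c)
  have hple_xz : ∀ a b c, p (a, b, c) ≤ pxz a c := fun a b c => (hxz a c) ▸
    Finset.single_le_sum (fun b' _ => hp0 (a, b', c)) (Finset.mem_univ b)
  have hple_yz : ∀ a b c, p (a, b, c) ≤ pyz b c := fun a b c => (hyz b c) ▸
    Finset.single_le_sum (fun a' _ => hp0 (a', b, c)) (Finset.mem_univ a)
  have hxz_le_z : ∀ a c, pxz a c ≤ pz c := fun a c => by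
    rw [hxz a c, hz c]
    exact Finset.single_le_sum (f := fun a' => ∑ b, p (a', b, c))
      (fun a' _ => Finset.sum_nonneg fun b _ => hp0 (a', b, c)) (Finset.mem_univ a)
  -- rewrite the four sums as triple sums
  have e1 : (∑ a, ∑ c, -(pxz a c * Real.logb 2 (pxz a c)))
      = ∑ a, ∑ b, ∑ c, -(p (a, b, c) * Real.logb 2 (pxz a c)) := by
    refine Finset.sum_congr rfl fun a _ => ?_
    rw [Finset.sum_comm]
    refine Finset.sum_congr rfl fun c _ => ?_
    rw [Finset.sum_neg_distrib, ← Finset.sum_mul, ← hxz a c]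
  have e2 : (∑ b, ∑ c, -(pyz b c * Real.logb 2 (pyz b c)))
      = ∑ a, ∑ b, ∑ c, -(p (a, b, c) * Real.logb 2 (pyz b c)) := by
    rw [sum_swap12 (fun a b c => -(p (a, b, c) * Real.logb 2 (pyz b c)))]
    refine Finset.sum_congr rfl fun b _ => ?_
    rw [Finset.sum_comm]
    refine Finset.sum_congr rfl fun c _ => ?_
    rw [Finset.sum_neg_distrib, ← Finset.sum_mul, ← hyz b c]
  have e3 : (∑ c, -(pz c * Real.logb 2 (pz c)))
      = ∑ a, ∑ b, ∑ c, -(p (a, b, c) * Real.logb 2 (pz c)) := by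
    rw [sum_rot (fun a b c => -(p (a, b, c) * Real.logb 2 (pz c)))]
    refine Finset.sum_congr rfl fun c _ => ?_
    simp only [Finset.sum_neg_distrib, neg_inj]
    rw [hz c]
    simp only [Finset.sum_mul]
  rw [e1, e2, e3]
  rw [show (∑ a, ∑ b, ∑ c, -(p (a,b,c) * Real.logb 2 (pxz a c)))
      + (∑ a, ∑ b, ∑ c, -(p (a,b,c) * Real.logb 2 (pyz b c)))
      - (∑ a, ∑ b, ∑ c, -(p (a,b,c) * Real.logb 2 (p (a,b,c))))
      - (∑ a, ∑ b, ∑ c, -(p (a,b,c) * Real.logb 2 (pz c)))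
      = ∑ a, ∑ b, ∑ c,
        (-(p (a,b,c) * Real.logb 2 (pxz a c)) + -(p (a,b,c) * Real.logb 2 (pyz b c))
          - -(p (a,b,c) * Real.logb 2 (p (a,b,c))) - -(p (a,b,c) * Real.logb 2 (pz c))) by
    simp only [Finset.sum_add_distrib, Finset.sum_sub_distrib]]
  have key : (∑ a, ∑ b, ∑ c,
      (p (a, b, c) - (if 0 < p (a, b, c) then pxz a c * pyz b c / pz c else 0)) / Real.log 2)
      ≤ ∑ a, ∑ b, ∑ c,
        (-(p (a,b,c) * Real.logb 2 (pxz a c)) + -(p (a,b,c) * Real.logb 2 (pyz b c))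
          - -(p (a,b,c) * Real.logb 2 (p (a,b,c))) - -(p (a,b,c) * Real.logb 2 (pz c))) := by
    refine Finset.sum_le_sum fun a _ => Finset.sum_le_sum fun b _ =>
      Finset.sum_le_sum fun c _ => ?_
    exact point_bound (hp0 (a, b, c)) (hple_xz a b c) (hple_yz a b c) (hxz_le_z a c)
  refine le_trans ?_ key
  have hgle : (∑ a, ∑ b, ∑ c, (if 0 < p (a, b, c) then pxz a c * pyz b c / pz c else 0)) ≤ 1 := by
    have step1 : (∑ a, ∑ b, ∑ c, (if 0 < p (a, b, c) then pxz a c * pyz b c / pz c else 0))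
        ≤ ∑ a, ∑ b, ∑ c, (if 0 < pz c then pxz a c * pyz b c / pz c else 0) := by
      refine Finset.sum_le_sum fun a _ => Finset.sum_le_sum fun b _ =>
        Finset.sum_le_sum fun c _ => ?_
      by_cases hc : 0 < p (a, b, c)
      · rw [if_pos hc, if_pos (lt_of_lt_of_le hc (le_trans (hple_xz a b c) (hxz_le_z a c)))]
      · rw [if_neg hc]
        split
        · have := hpxz0 a c; have := hpyz0 b c; have := hpz0 c; positivity
        · exact le_refl 0
    refine le_trans step1 ?_
    rw [sum_rot (fun a b c => if 0 < pz c then pxz a c * pyz b c / pz c else 0)]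
    have inner : ∀ c, (∑ a, ∑ b, (if 0 < pz c then pxz a c * pyz b c / pz c else 0)) ≤ pz c := by
      intro c
      by_cases hc : 0 < pz c
      · simp only [if_pos hc]
        have h2 : (∑ a, ∑ b, pxz a c * pyz b c / pz c)
            = (∑ a, pxz a c) * (∑ b, pyz b c) / pz c := by
          rw [Finset.sum_mul_sum, Finset.sum_div]
          exact Finset.sum_congr rfl fun a _ => by rw [Finset.sum_div]
        rw [h2]
        have hxsum : (∑ a, pxz a c) = pz c := by
          rw [hz c]; exact Finset.sum_congr rfl fun a _ => hxz a c
        have hysum : (∑ b, pyz b c) = pz c := by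
          rw [hz c, Finset.sum_comm]; exact Finset.sum_congr rfl fun b _ => hyz b c
        rw [hxsum, hysum, mul_div_assoc, div_self hc.ne', mul_one]
      · simp only [if_neg hc]
        simpa using hpz0 c
    calc (∑ c, ∑ a, ∑ b, (if 0 < pz c then pxz a c * pyz b c / pz c else 0))
        ≤ ∑ c, pz c := Finset.sum_le_sum fun c _ => inner c
      _ = 1 := by
          rw [show (∑ c, pz c) = ∑ c, ∑ a, ∑ b, p (a, b, c) from
            Finset.sum_congr rfl fun c _ => hz c]
          rw [← sum_rot (fun a b c => p (a, b, c)), hsum]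
  have hlog2 : 0 < Real.log 2 := Real.log_pos one_lt_two
  have expand : (∑ a, ∑ b, ∑ c,
      (p (a, b, c) - (if 0 < p (a, b, c) then pxz a c * pyz b c / pz c else 0)) / Real.log 2)
      = ((∑ a, ∑ b, ∑ c, p (a, b, c))
        - (∑ a, ∑ b, ∑ c, (if 0 < p (a, b, c) then pxz a c * pyz b c / pz c else 0)))
        / Real.log 2 := by
    simp only [sub_div, Finset.sum_sub_distrib, Finset.sum_div]
  rw [expand, hsum]
  exact div_nonneg (by linarith) hlog2.le

set_option maxHeartbeats 1000000 in
lemma cmi_nonneg {μ : Ω → ℝ} (hμ : isDist μ) (X : Ω → α) (Y : Ω → β) (Z : Ω → γ) :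
    0 ≤ cmi μ X Y Z := by
  classical
  set p : α × β × γ → ℝ := dst μ (fun ω => (X ω, Y ω, Z ω)) with hp
  have hsum : ∑ a, ∑ b, ∑ c, p (a, b, c) = 1 := by
    rw [show (∑ a, ∑ b, ∑ c, p (a, b, c)) = ∑ q : α × β × γ, p q by
      rw [Fintype.sum_prod_type]
      exact Finset.sum_congr rfl fun a _ => (Fintype.sum_prod_type (fun q : β × γ => p (a, q.1, q.2))).symm]
    rw [hp, sum_dst, hμ.2]
  have h := core_nonneg p
    (fun a c => dst μ (fun ω => (X ω, Z ω)) (a, c))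
    (fun b c => dst μ (fun ω => (Y ω, Z ω)) (b, c))
    (dst μ Z)
    (fun q => dst_nonneg hμ.1 _ q) hsum
    (fun a c => by rw [hp]; exact dst_XZ μ X Y Z a c)
    (fun b c => by rw [hp]; exact dst_YZ μ X Y Z b c)
    (fun c => by rw [hp]; exact dst_Z μ X Y Z c)
  rw [cmi]
  have r1 : ent μ (fun ω => (X ω, Z ω))
      = ∑ a, ∑ c, -(dst μ (fun ω => (X ω, Z ω)) (a, c)
        * Real.logb 2 (dst μ (fun ω => (X ω, Z ω)) (a, c))) := by
    rw [ent, entD, Fintype.sum_prod_type]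
  have r2 : ent μ (fun ω => (Y ω, Z ω))
      = ∑ b, ∑ c, -(dst μ (fun ω => (Y ω, Z ω)) (b, c)
        * Real.logb 2 (dst μ (fun ω => (Y ω, Z ω)) (b, c))) := by
    rw [ent, entD, Fintype.sum_prod_type]
  have r3 : ent μ (fun ω => (X ω, Y ω, Z ω))
      = ∑ a, ∑ b, ∑ c, -(p (a, b, c) * Real.logb 2 (p (a, b, c))) := by
    rw [ent, entD, ← hp, Fintype.sum_prod_type]
    exact Finset.sum_congr rfl fun a _ => Fintype.sum_prod_type _
  have r4 : ent μ Z = ∑ c, -(dst μ Z c * Real.logb 2 (dst μ Z c)) := rfl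
  rw [r1, r2, r3, r4]
  exact h

end Lemmas4
section Lemmas5
variable {Ω : Type*} [Fintype Ω] {α β γ : Type*} [Fintype α] [Fintype β] [Fintype γ]

lemma condEnt_nonneg {μ : Ω → ℝ} (hμ : isDist μ) (X : Ω → α) (Y : Ω → β) :
    0 ≤ condEnt μ X Y := by
  have h := cmi_nonneg hμ X X Y
  have e : ent μ (fun ω => (X ω, X ω, Y ω)) = ent μ (fun ω => (X ω, Y ω)) :=
    ent_comp_inj μ (fun ω => (X ω, Y ω)) (f := fun q : α × β => (q.1, q.1, q.2))
      (by intro q q' hq; aesop)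
  simp only [cmi] at h
  rw [e] at h
  simp only [condEnt]
  linarith

lemma condEnt_comp_le {μ : Ω → ℝ} (hμ : isDist μ) (M : Ω → α) (W : Ω → β) (f : β → γ) :
    condEnt μ M W ≤ condEnt μ M (fun ω => f (W ω)) := by
  have h := cmi_nonneg hμ M W (fun ω => f (W ω))
  simp only [cmi] at h
  have r1 : ent μ (fun ω => (W ω, f (W ω))) = ent μ W :=
    ent_comp_inj μ W (f := fun b => (b, f b)) (by intro b b' hb; aesop)
  have r2 : ent μ (fun ω => (M ω, W ω, f (W ω))) = ent μ (fun ω => (M ω, W ω)) :=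
    ent_comp_inj μ (fun ω => (M ω, W ω)) (f := fun q : α × β => (q.1, q.2, f q.2))
      (by intro q q' hq; aesop)
  rw [r1, r2] at h
  simp only [condEnt]
  linarith

lemma condEnt_adjoin_le {μ : Ω → ℝ} (hμ : isDist μ) (M : Ω → α) (V : Ω → β) (W : Ω → γ)
    (hVW : condEnt μ V W = 0) :
    condEnt μ M W ≤ condEnt μ M (fun ω => (V ω, W ω)) := by
  have h := condEnt_nonneg hμ V (fun ω => (M ω, W ω))
  simp only [condEnt] at h hVW ⊢
  have r : ent μ (fun ω => (V ω, M ω, W ω)) = ent μ (fun ω => (M ω, V ω, W ω)) :=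
    ent_comp_inj μ (fun ω => (M ω, V ω, W ω)) (f := fun q : α × β × γ => (q.2.1, q.1, q.2.2))
      (by intro q q' hq; aesop)
  rw [r] at h
  linarith

end Lemmas5


/-- if `M` is a.s. a function of `(C,X)` and `M̂` is a.s. a function of `(C,Y)`,
then `H(M) ≤ I(X;Y|(C,Ȳ)) + I(M;(C,Ȳ)) + H(M|M̂)`. -/
theorem statement7 {Ω A A' B C C' D : Type*} [Fintype Ω] [Fintype A] [Fintype A'] [Fintype B]
    [Fintype C] [Fintype C'] [Fintype D]
    (μ : Ω → ℝ) (hμ : isDist μ)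
    (M : Ω → A) (Mhat : Ω → A') (X : Ω → B) (Y : Ω → C) (Ybar : Ω → C') (Cc : Ω → D)
    (h1 : condEnt μ M (fun ω => (Cc ω, X ω)) = 0)
    (h2 : condEnt μ Mhat (fun ω => (Cc ω, Y ω)) = 0) :
    ent μ M ≤ cmi μ X Y (fun ω => (Cc ω, Ybar ω)) + mi μ M (fun ω => (Cc ω, Ybar ω))
      + condEnt μ M Mhat := by
  classical
  -- Step 1 : H(M | X, C, Ȳ) = 0
  have hMXZ : condEnt μ M (fun ω => (X ω, Cc ω, Ybar ω)) = 0 := by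
    refine le_antisymm ?_ (condEnt_nonneg hμ M _)
    have h := condEnt_comp_le hμ M (fun ω => (X ω, Cc ω, Ybar ω))
      (fun q : B × D × C' => (q.2.1, q.1))
    simp only at h
    rwa [h1] at h
  -- Step 2 : data-processing facts
  have A1 := cmi_nonneg hμ X Y (fun ω => (M ω, Cc ω, Ybar ω))
  simp only [cmi] at A1
  have R1 : ent μ (fun ω => (X ω, M ω, Cc ω, Ybar ω))
      = ent μ (fun ω => (M ω, X ω, Cc ω, Ybar ω)) :=
    ent_comp_inj μ (fun ω => (M ω, X ω, Cc ω, Ybar ω))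
      (f := fun q : A × B × D × C' => (q.2.1, q.1, q.2.2)) (by intro q q' hq; aesop)
  have R2 : ent μ (fun ω => (Y ω, M ω, Cc ω, Ybar ω))
      = ent μ (fun ω => (M ω, Y ω, Cc ω, Ybar ω)) :=
    ent_comp_inj μ (fun ω => (M ω, Y ω, Cc ω, Ybar ω))
      (f := fun q : A × C × D × C' => (q.2.1, q.1, q.2.2)) (by intro q q' hq; aesop)
  have R3 : ent μ (fun ω => (X ω, Y ω, M ω, Cc ω, Ybar ω))
      = ent μ (fun ω => (M ω, X ω, Y ω, Cc ω, Ybar ω)) :=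
    ent_comp_inj μ (fun ω => (M ω, X ω, Y ω, Cc ω, Ybar ω))
      (f := fun q : A × B × C × D × C' => (q.2.1, q.2.2.1, q.1, q.2.2.2))
      (by intro q q' hq; aesop)
  rw [R1, R2, R3] at A1
  have A2 := condEnt_nonneg hμ M (fun ω => (X ω, Y ω, Cc ω, Ybar ω))
  simp only [condEnt] at A2 hMXZ
  -- Claim 1 : H(M | Y, C, Ȳ) ≤ H(M | M̂)
  have s1 : condEnt μ Mhat (fun ω => (Y ω, Cc ω, Ybar ω)) = 0 := by
    refine le_antisymm ?_ (condEnt_nonneg hμ Mhat _)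
    have h := condEnt_comp_le hμ Mhat (fun ω => (Y ω, Cc ω, Ybar ω))
      (fun q : C × D × C' => (q.2.1, q.1))
    simp only at h
    rwa [h2] at h
  have s2 : condEnt μ M (fun ω => (Y ω, Cc ω, Ybar ω))
      ≤ condEnt μ M (fun ω => (Mhat ω, Y ω, Cc ω, Ybar ω)) :=
    condEnt_adjoin_le hμ M Mhat (fun ω => (Y ω, Cc ω, Ybar ω)) s1
  have s3 : condEnt μ M (fun ω => (Mhat ω, Y ω, Cc ω, Ybar ω)) ≤ condEnt μ M Mhat := by
    have h := condEnt_comp_le hμ M (fun ω => (Mhat ω, Y ω, Cc ω, Ybar ω))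
      (fun q : A' × C × D × C' => q.1)
    simpa using h
  have claim1 := s2.trans s3
  simp only [condEnt] at claim1
  -- Finish
  simp only [cmi, mi, condEnt]
  linarith
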